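/- Let a > 0, θ ≥ 0, and σ ∈ {−1, 1}. The function ū(x) = σ·a/√(−W₋₁(−exp(σθx + c₁))), where W₋₁ is the lower real branch of the Lambert W function and c₁ < −1, satisfies the ordinary differential equation ū'(x) = (θ/2)·|ū(x)|·ū(x)²/(a² − ū(x)²) on any interval where the expression −exp(σθx + c₁) lies in (−1/e, 0) and ū(x)² < a². -/

import Mathlib

open Real Set

set_option maxHeartbeats 1600000 in
theorem stationary_state_ode (a θ c₁ : ℝ) (ha : 0 < a) (hθ : 0 ≤ θ)
    (σ : ℝ) (hσ : σ = -1 ∨ σ = 1) (hc₁ : c₁ < -1)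
    (W : ℝ → ℝ)
    (hW : ∀ y ∈ Ioo (-(1 / Real.exp 1)) 0, W y ≤ -1 ∧ W y * Real.exp (W y) = y)
    (hWc : ContinuousOn W (Ioo (-(1 / Real.exp 1)) 0))
    (ubar : ℝ → ℝ)
    (hubar : ∀ x, ubar x = σ * a / Real.sqrt (-(W (-Real.exp (σ * θ * x + c₁)))))
    (x : ℝ)
    (hdom : -Real.exp (σ * θ * x + c₁) ∈ Ioo (-(1 / Real.exp 1)) 0)
    (hsub : ubar x ^ 2 < a ^ 2) :
    HasDerivAt ubar ((θ / 2) * |ubar x| * ubar x ^ 2 / (a ^ 2 - ubar x ^ 2)) x := by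
  have hσ2 : σ * σ = 1 := by rcases hσ with h | h <;> simp [h]
  have habsσ : |σ| = 1 := by rcases hσ with h | h <;> simp [h]
  set g : ℝ → ℝ := fun x => σ * θ * x + c₁ with hg
  set y : ℝ → ℝ := fun x => -Real.exp (g x) with hy
  set w : ℝ := W (y x) with hwdef
  have hyx : y x ∈ Ioo (-(1 / Real.exp 1)) 0 := hdom
  obtain ⟨hw1, hweq⟩ := hW _ hyx
  have hwlt : w < -1 := by
    rcases lt_or_eq_of_le hw1 with h | h
    · exact h
    · exfalso
      have hyeq : y x = -(1 / Real.exp 1) := by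
        rw [← hweq, h]
        rw [Real.exp_neg]
        field_simp
      exact (ne_of_gt hyx.1) hyeq
  have hexpne : Real.exp w ≠ 0 := Real.exp_ne_zero w
  have h1w : 1 + w < 0 := by linarith
  have h1wne : 1 + w ≠ 0 := ne_of_lt h1w
  -- derivative of W at y x
  have hcontW : ContinuousAt W (y x) := hWc.continuousAt (isOpen_Ioo.mem_nhds hyx)
  have hf : HasDerivAt (fun t => t * Real.exp t) ((1 + w) * Real.exp w) w := by
    have := (hasDerivAt_id w).mul (Real.hasDerivAt_exp w)
    exact this.congr_deriv (by show 1 * Real.exp w + w * Real.exp w = (1 + w) * Real.exp w; ring)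
  have hne : (1 + w) * Real.exp w ≠ 0 := mul_ne_zero h1wne hexpne
  have hfg : ∀ᶠ z in nhds (y x), (fun t => t * Real.exp t) (W z) = z := by
    filter_upwards [isOpen_Ioo.mem_nhds hyx] with z hz
    exact (hW z hz).2
  have hWd : HasDerivAt W ((1 + w) * Real.exp w)⁻¹ (y x) :=
    HasDerivAt.of_local_left_inverse hcontW hf hne hfg
  -- derivative of y
  have hgd : HasDerivAt g (σ * θ) x := by
    exact (((hasDerivAt_id' x).const_mul (σ * θ)).add_const c₁).congr_deriv (mul_one _)
  have hyd : HasDerivAt y (σ * θ * y x) x := by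
    have h2 := (Real.hasDerivAt_exp (g x)).comp x hgd
    have h3 := h2.neg
    exact h3.congr_deriv (by show -(Real.exp (g x) * (σ * θ)) = σ * θ * -Real.exp (g x); ring)
  -- chain rule
  have hhd : HasDerivAt (fun t => W (y t))
      (((1 + w) * Real.exp w)⁻¹ * (σ * θ * y x)) x := hWd.comp x hyd
  have hval : ((1 + w) * Real.exp w)⁻¹ * (σ * θ * y x) = σ * θ * w / (1 + w) := by
    rw [← hweq]
    field_simp
    ring
  rw [hval] at hhd
  -- sqrt
  have hwpos : (0 : ℝ) < -w := by linarith
  set s : ℝ := Real.sqrt (-w) with hs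
  have hs2 : s ^ 2 = -w := Real.sq_sqrt (le_of_lt hwpos)
  have hspos : 0 < s := Real.sqrt_pos.mpr hwpos
  have hnegd : HasDerivAt (fun t => -(W (y t))) (-(σ * θ * w / (1 + w))) x := hhd.neg
  have hsqrtd : HasDerivAt (fun t => Real.sqrt (-(W (y t))))
      (1 / (2 * s) * -(σ * θ * w / (1 + w))) x := by
    have := (Real.hasDerivAt_sqrt (ne_of_gt hwpos)).comp x hnegd
    exact this
  have hud : HasDerivAt (fun t => σ * a / Real.sqrt (-(W (y t))))
      ((0 * s - σ * a * (1 / (2 * s) * -(σ * θ * w / (1 + w)))) / s ^ 2) x :=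
    (hasDerivAt_const x (σ * a)).div hsqrtd (ne_of_gt hspos)
  have hfun : ubar = fun t => σ * a / Real.sqrt (-(W (y t))) := funext hubar
  have hud2 : HasDerivAt ubar
      ((0 * s - σ * a * (1 / (2 * s) * -(σ * θ * w / (1 + w)))) / s ^ 2) x := by
    rw [hfun]; exact hud
  convert hud2 using 1
  -- value computation
  have hux : ubar x = σ * a / s := hubar x
  have habs : |ubar x| = a / s := by
    rw [hux, abs_div, abs_mul, habsσ, abs_of_pos ha, abs_of_pos hspos, one_mul]
  have hw' : w = -(s ^ 2) := by linarith
  have hs21 : s ^ 2 - 1 > 0 := by rw [hs2]; linarith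
  have hsne : s ≠ 0 := ne_of_gt hspos
  have hane : a ≠ 0 := ne_of_gt ha
  have h1wne' : 1 + -(s ^ 2) ≠ 0 := by rw [← hw']; exact h1wne
  have hσsq : σ ^ 2 = 1 := by rw [sq, hσ2]
  have hden' : a ^ 2 - (σ * a / s) ^ 2 ≠ 0 := by
    have h0 : (σ * a / s) ^ 2 = σ ^ 2 * a ^ 2 / s ^ 2 := by ring
    rw [h0, hσsq, one_mul]
    have h2 : a ^ 2 / s ^ 2 < a ^ 2 := by
      rw [div_lt_iff₀ (by positivity)]
      nlinarith
    linarith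
  have hs21' : s ^ 2 - 1 ≠ 0 := ne_of_gt hs21
  rw [habs, hux, hw']
  have hDpos : (0:ℝ) < a ^ 2 * s ^ 3 * (s ^ 2 - 1) :=
    mul_pos (mul_pos (pow_pos ha 2) (pow_pos hspos 3)) hs21
  have hDne : -(a ^ 2 * s ^ 3 * 2) + a ^ 2 * s ^ 5 * 2 ≠ 0 := by nlinarith
  rcases hσ with rfl | rfl <;>
  · field_simp
    ring_nf
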